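/- Let (T,β) be a tree decomposition of a finite simple graph G, let r be a fixed root of T, and let a and b be two distinct children of a node t (with respect to the root r) such that β(a) ∩ β(t) = β(b) ∩ β(t). Let T' be the graph obtained from T by deleting the edge bt and adding the edge ab. Then T' is a tree and (T',β) is a tree decomposition of G. -/

import Mathlib

open SimpleGraph

/-- A tree decomposition of a finite simple graph `G` with tree `Tg`. -/
structure TreeDecomp {V T : Type} [Fintype V] [Fintype T]
    (G : SimpleGraph V) (Tg : SimpleGraph T) where
  /-- the underlying tree is indeed a tree -/
  isTree : Tg.IsTree
  /-- the bag of each node -/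
  bag : T → Finset V
  /-- every vertex lies in some bag -/
  mem_bag : ∀ v : V, ∃ t : T, v ∈ bag t
  /-- every edge of `G` is contained in some bag -/
  edge_bag : ∀ u v : V, G.Adj u v → ∃ t : T, u ∈ bag t ∧ v ∈ bag t
  /-- the set of nodes whose bag contains a given vertex induces a subtree -/
  bag_connected : ∀ v : V, (Tg.induce {t : T | v ∈ bag t}).Connected

/-- The width of a tree decomposition: maximal bag size minus one. -/
def TreeDecomp.width {V T : Type} [Fintype V] [Fintype T]
    {G : SimpleGraph V} {Tg : SimpleGraph T} (td : TreeDecomp G Tg) : ℕ :=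
  (Finset.univ.sup fun t : T => (td.bag t).card) - 1

/-- The graph obtained from `Tg` by deleting the edge `bt` and adding the
edge `ab`. -/
def rewire {T : Type} (Tg : SimpleGraph T) (t a b : T) : SimpleGraph T :=
  SimpleGraph.fromEdgeSet ((Tg.edgeSet \ {s(b, t)}) ∪ {s(a, b)})

section Helpers

open SimpleGraph

variable {T : Type} {Tg : SimpleGraph T} {t a b : T}

private lemma rewire_adj_iff {u w : T} :
    (rewire Tg t a b).Adj u w ↔
      (s(u, w) ∈ (Tg.edgeSet \ {s(b, t)}) ∪ {s(a, b)}) ∧ u ≠ w :=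
  fromEdgeSet_adj _

private lemma rewire_adj_of_adj {u w : T} (h : Tg.Adj u w) (hne : s(u, w) ≠ s(b, t)) :
    (rewire Tg t a b).Adj u w :=
  rewire_adj_iff.2 ⟨Or.inl ⟨Tg.mem_edgeSet.mpr h, hne⟩, h.ne⟩

private lemma rewire_adj_ab (hab : a ≠ b) : (rewire Tg t a b).Adj a b :=
  rewire_adj_iff.2 ⟨Or.inr rfl, hab⟩

private lemma sta_ne_sbt (hab : a ≠ b) (hta : t ≠ a) : s(t, a) ≠ s(b, t) := by
  intro h
  rw [Sym2.eq_iff] at h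
  rcases h with ⟨h1, h2⟩ | ⟨h1, h2⟩
  · exact hta h2.symm
  · exact hab h2

private lemma rewire_adj_ta (hab : a ≠ b) (hta : Tg.Adj t a) :
    (rewire Tg t a b).Adj t a :=
  rewire_adj_of_adj hta (sta_ne_sbt hab hta.ne)

/-- Any adjacency of `Tg` gives reachability in the rewired graph. -/
private lemma rewire_reachable_of_adj (hab : a ≠ b) (hta : Tg.Adj t a)
    {u w : T} (h : Tg.Adj u w) : (rewire Tg t a b).Reachable u w := by
  by_cases hne : s(u, w) = s(b, t)
  · rw [Sym2.eq_iff] at hne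
    have hb : (rewire Tg t a b).Reachable b t :=
      ((rewire_adj_ab hab).symm.reachable).trans (rewire_adj_ta hab hta).symm.reachable
    rcases hne with ⟨rfl, rfl⟩ | ⟨rfl, rfl⟩
    · exact hb
    · exact hb.symm
  · exact (rewire_adj_of_adj h hne).reachable

private lemma rewire_connected (hab : a ≠ b) (hta : Tg.Adj t a)
    (hc : Tg.Connected) : (rewire Tg t a b).Connected := by
  have hne : Nonempty T := hc.nonempty
  refine ⟨fun u w => ?_⟩
  obtain ⟨p⟩ := hc.preconnected u w
  induction p with
  | nil => exact Reachable.refl _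
  | cons h _ ih => exact (rewire_reachable_of_adj hab hta h).trans ih

private lemma rewire_isAcyclic (hab : a ≠ b) (hta : Tg.Adj t a) (htb : Tg.Adj t b)
    (hT : Tg.IsAcyclic) : (rewire Tg t a b).IsAcyclic := by
  intro u c hc
  by_cases hmem : s(a, b) ∈ c.edges
  · -- the cycle uses the new edge `ab`; this yields a `t`–`b` connection
    -- avoiding the bridge `tb` of the tree `Tg`, contradiction.
    have hbridge : Tg.IsBridge s(t, b) := isAcyclic_iff_forall_adj_isBridge.mp hT htb
    rw [isBridge_iff] at hbridge
    have hkey := adj_and_reachable_delete_edges_iff_exists_cycle.mpr ⟨u, c, hc, hmem⟩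
    have hle : (rewire Tg t a b \ fromEdgeSet {s(a, b)}) ≤ (Tg \ fromEdgeSet {s(t, b)}) := by
      intro x y hxy
      rw [sdiff_adj, rewire_adj_iff, fromEdgeSet_adj] at hxy
      obtain ⟨⟨hmem', hne⟩, hnab⟩ := hxy
      have hxyab : s(x, y) ≠ s(a, b) := fun h => hnab ⟨by simpa [h], hne⟩
      rcases hmem' with ⟨he, hbt⟩ | he
      · rw [sdiff_adj, fromEdgeSet_adj]
        refine ⟨he, fun h => hbt ?_⟩
        have h2 : s(x, y) = s(t, b) := h.1
        rw [h2, Set.mem_singleton_iff]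
        exact Sym2.eq_swap
      · exact absurd he hxyab
    have hreach : (Tg \ fromEdgeSet {s(t, b)}).Reachable a b :=
      (hkey.2).mono hle
    have hta' : (Tg \ fromEdgeSet {s(t, b)}).Adj t a := by
      rw [sdiff_adj, fromEdgeSet_adj]
      refine ⟨hta, fun h => ?_⟩
      have h1 : s(t, a) = s(t, b) := h.1
      rw [Sym2.eq_iff] at h1
      rcases h1 with ⟨-, h2⟩ | ⟨h2, h3⟩
      · exact hab h2
      · exact hta.ne' h3
    exact hbridge (hta'.reachable.trans hreach)
  · -- the cycle lives in `Tg`, contradiction with acyclicity.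
    have hsub : ∀ e ∈ c.edges, e ∈ Tg.edgeSet := by
      intro e he
      have he' := c.edges_subset_edgeSet he
      rw [rewire, edgeSet_fromEdgeSet] at he'
      rcases he'.1 with ⟨h1, _⟩ | h1
      · exact h1
      · exact absurd (h1 ▸ he) hmem
    exact hT (c.transfer Tg hsub) (hc.transfer hsub)

end Helpers

/-- If `a` and `b` are distinct children of a node `t` (with respect to a root
`r`) with the same navel `β(a) ∩ β(t) = β(b) ∩ β(t)`, then deleting the tree
edge `bt` and adding the edge `ab` yields again a tree decomposition of `G`
(on a tree). -/
theorem rewire_treeDecomp {V T : Type} [Fintype V] [Fintype T] [DecidableEq V]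
    (G : SimpleGraph V) (Tg : SimpleGraph T) (td : TreeDecomp G Tg)
    (r t a b : T) (hab : a ≠ b)
    (ha_adj : Tg.Adj t a) (ha_child : Tg.dist r a = Tg.dist r t + 1)
    (hb_adj : Tg.Adj t b) (hb_child : Tg.dist r b = Tg.dist r t + 1)
    (hnavel : td.bag a ∩ td.bag t = td.bag b ∩ td.bag t) :
    ∃ td' : TreeDecomp G (rewire Tg t a b), td'.bag = td.bag := by
  refine ⟨⟨⟨rewire_connected hab ha_adj td.isTree.isConnected,
      rewire_isAcyclic hab ha_adj hb_adj td.isTree.IsAcyclic⟩,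
      td.bag, td.mem_bag, td.edge_bag, ?_⟩, rfl⟩
  intro v
  have hc := td.bag_connected v
  set S : Set T := {x : T | v ∈ td.bag x} with hS
  have hne : Nonempty S := hc.nonempty
  refine ⟨fun x y => ?_⟩
  obtain ⟨p⟩ := hc.preconnected x y
  induction p with
  | nil => exact Reachable.refl _
  | @cons x' y' _ h _ ih =>
    refine Reachable.trans ?_ ih
    have hadj : Tg.Adj ↑x' ↑y' := h
    by_cases heq : s((x' : T), (y' : T)) = s(b, t)
    · -- both b and t contain v, hence so does a; go through a
      have hbt : b ∈ S ∧ t ∈ S := by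
        rw [Sym2.eq_iff] at heq
        rcases heq with ⟨h1, h2⟩ | ⟨h1, h2⟩
        · exact ⟨h1 ▸ x'.2, h2 ▸ y'.2⟩
        · exact ⟨h2 ▸ y'.2, h1 ▸ x'.2⟩
      have haS : a ∈ S := by
        have : v ∈ td.bag b ∩ td.bag t := Finset.mem_inter.mpr ⟨hbt.1, hbt.2⟩
        rw [← hnavel] at this
        exact (Finset.mem_inter.mp this).1
      have hra : ((rewire Tg t a b).induce S).Reachable ⟨b, hbt.1⟩ ⟨t, hbt.2⟩ := by
        have h1 : ((rewire Tg t a b).induce S).Adj ⟨b, hbt.1⟩ ⟨a, haS⟩ :=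
          (rewire_adj_ab hab).symm
        have h2 : ((rewire Tg t a b).induce S).Adj ⟨a, haS⟩ ⟨t, hbt.2⟩ :=
          (rewire_adj_ta hab ha_adj).symm
        exact h1.reachable.trans h2.reachable
      rw [Sym2.eq_iff] at heq
      rcases heq with ⟨h1, h2⟩ | ⟨h1, h2⟩
      · rw [show x' = ⟨b, hbt.1⟩ from Subtype.ext h1, show y' = ⟨t, hbt.2⟩ from Subtype.ext h2]
        exact hra
      · rw [show x' = ⟨t, hbt.2⟩ from Subtype.ext h1, show y' = ⟨b, hbt.1⟩ from Subtype.ext h2]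
        exact hra.symm
    · exact (Adj.reachable (by exact rewire_adj_of_adj hadj heq :
        (rewire Tg t a b).Adj ↑x' ↑y'))
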